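/- In the binary choice panel data model Y_t = 1{X_t'β + v ≥ ε_t}, if the distribution of ε_t conditional on (X,v) is time-invariant with everywhere positive density, then for any two periods s < t: (X_s − X_t)'β > 0 ⟺ E(Y_s − Y_t | X) > 0, with equality and negative analogues (i.e., sgn((X_s−X_t)'β) = sgn(E(Y_s − Y_t|X)) almost surely). -/

import Mathlib

open MeasureTheory Set

/-- Conditional expectation of `f` given the σ-algebra generated by the random element `X`. -/
noncomputable def condExpGiven {Ω 𝓧 : Type*} [MeasurableSpace Ω] [MeasurableSpace 𝓧]
    (μ : Measure Ω) (X : Ω → 𝓧) (f : Ω → ℝ) : Ω → ℝ :=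
  μ[f | MeasurableSpace.comap X inferInstance]


lemma aux_integrable_ind {Ω : Type*} [MeasurableSpace Ω] (μ : Measure Ω) [IsFiniteMeasure μ]
    {e c : Ω → ℝ} (he : Measurable e) (hc : Measurable c) :
    Integrable (fun ω => if e ω ≤ c ω then (1:ℝ) else 0) μ := by
  have hmeas : Measurable (fun ω => if e ω ≤ c ω then (1:ℝ) else 0) :=
    Measurable.ite (measurableSet_le he hc) measurable_const measurable_const
  refine (integrable_const (1:ℝ)).mono' hmeas.aestronglyMeasurable ?_
  filter_upwards with ω
  by_cases h : e ω ≤ c ω <;> simp [h]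

lemma aux_setIntegral_pos {Ω : Type*} {m₀ : MeasurableSpace Ω} [mΩ : MeasurableSpace Ω]
    (hm₀ : m₀ ≤ mΩ) (μ : @Measure Ω mΩ) [IsProbabilityMeasure μ]
    {e₁ e₂ a₁ a₂ : Ω → ℝ} (he₁ : Measurable e₁) (he₂ : Measurable e₂)
    (ha₁ : Measurable[m₀] a₁) (ha₂ : Measurable[m₀] a₂)
    {G : ℝ → Ω → ℝ}
    (hG₁ : ∀ r : ℝ, μ[(fun ω => if e₁ ω ≤ r then (1:ℝ) else 0) | m₀] =ᵐ[μ] G r)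
    (hG₂ : ∀ r : ℝ, μ[(fun ω => if e₂ ω ≤ r then (1:ℝ) else 0) | m₀] =ᵐ[μ] G r)
    (hGmono : ∀ ω, StrictMono (fun r => G r ω))
    {B : Set Ω} (hB : MeasurableSet[m₀] B)
    (hBsub : ∀ ω ∈ B, a₂ ω < a₁ ω) (hμB : 0 < μ B) :
    0 < ∫ ω in B, ((if e₁ ω ≤ a₁ ω then (1:ℝ) else 0) - (if e₂ ω ≤ a₂ ω then 1 else 0)) ∂μ := by
  haveI : SigmaFinite (μ.trim hm₀) := by
    haveI := isFiniteMeasure_trim hm₀ (μ := μ)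
    infer_instance
  obtain ⟨W, hWsurj⟩ := exists_surjective_nat (ℚ × ℚ)
  set C : ℕ → Set Ω := fun n =>
    B ∩ {ω | a₂ ω ≤ ((W n).1 : ℝ)} ∩ {ω | ((W n).2 : ℝ) ≤ a₁ ω} ∩
      {_ω | ((W n).1 : ℝ) < ((W n).2 : ℝ)} with hC
  have hCmeas : ∀ n, MeasurableSet[m₀] (C n) := by
    intro n
    refine (((hB.inter ?_).inter ?_).inter (MeasurableSet.const _))
    · exact measurableSet_le ha₂ measurable_const
    · exact measurableSet_le measurable_const ha₁
  have hcover : B = ⋃ n, C n := by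
    apply Subset.antisymm
    · intro ω hω
      obtain ⟨p, hp1, hp2⟩ := exists_rat_btwn (hBsub ω hω)
      obtain ⟨qq, hq1, hq2⟩ := exists_rat_btwn hp2
      obtain ⟨n, hn⟩ := hWsurj (p, qq)
      refine mem_iUnion.mpr ⟨n, ?_⟩
      simp only [hC, mem_inter_iff, mem_setOf_eq, hn]
      exact ⟨⟨⟨hω, le_of_lt hp1⟩, le_of_lt hq2⟩, by exact_mod_cast hq1⟩
    · exact iUnion_subset fun n => fun ω hω => hω.1.1.1
  set D : ℕ → Set Ω := fun n => disjointed C n with hD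
  have hDmeas : ∀ n, MeasurableSet[m₀] (D n) := MeasurableSet.disjointed hCmeas
  have hDmeasΩ : ∀ n, MeasurableSet (D n) := fun n => hm₀ _ (hDmeas n)
  have hDsub : ∀ n, D n ⊆ C n := disjointed_subset C
  have hDU : ⋃ n, D n = B := by rw [hD, iUnion_disjointed, ← hcover]
  have ha₁Ω : Measurable a₁ := ha₁.mono hm₀ le_rfl
  have ha₂Ω : Measurable a₂ := ha₂.mono hm₀ le_rfl
  set f : Ω → ℝ :=
    fun ω => (if e₁ ω ≤ a₁ ω then (1:ℝ) else 0) - (if e₂ ω ≤ a₂ ω then 1 else 0) with hf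
  have hf_int : Integrable f μ :=
    (aux_integrable_ind μ he₁ ha₁Ω).sub (aux_integrable_ind μ he₂ ha₂Ω)
  have hG_int : ∀ r : ℝ, Integrable (G r) μ := fun r =>
    integrable_condExp.congr (hG₁ r)
  -- key estimate on each piece
  have key : ∀ n, (μ (D n) = 0 → ∫ ω in D n, f ω ∂μ = 0) ∧
      (0 < μ (D n) → 0 < ∫ ω in D n, f ω ∂μ) := by
    intro n
    constructor
    · intro h0
      exact setIntegral_measure_zero _ h0
    · intro hpos
      obtain ⟨ω₀, hω₀⟩ := nonempty_of_measure_ne_zero hpos.ne'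
      have hpq : ((W n).1 : ℝ) < ((W n).2 : ℝ) := (hDsub n hω₀).2
      set p : ℝ := ((W n).1 : ℝ)
      set qr : ℝ := ((W n).2 : ℝ)
      -- step 1 : pointwise comparison on D n
      have step1 : ∫ ω in D n, ((if e₁ ω ≤ qr then (1:ℝ) else 0)
            - (if e₂ ω ≤ p then 1 else 0)) ∂μ ≤ ∫ ω in D n, f ω ∂μ := by
        refine setIntegral_mono_on ?_ ?_ (hDmeasΩ n) ?_
        · exact ((aux_integrable_ind μ he₁ measurable_const).sub
            (aux_integrable_ind μ he₂ measurable_const)).integrableOn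
        · exact hf_int.integrableOn
        · intro ω hω
          have hC₁ : qr ≤ a₁ ω := (hDsub n hω).1.2
          have hC₂ : a₂ ω ≤ p := (hDsub n hω).1.1.2
          have h1 : (if e₁ ω ≤ qr then (1:ℝ) else 0) ≤ (if e₁ ω ≤ a₁ ω then (1:ℝ) else 0) := by
            by_cases h : e₁ ω ≤ qr
            · simp [h, h.trans hC₁]
            · simp [h]; positivity
          have h2 : (if e₂ ω ≤ a₂ ω then (1:ℝ) else 0) ≤ (if e₂ ω ≤ p then (1:ℝ) else 0) := by
            by_cases h : e₂ ω ≤ a₂ ω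
            · simp [h, h.trans hC₂]
            · simp [h]; positivity
          exact sub_le_sub h1 h2
      -- step 2 : identify the set integrals with those of G
      have step2 : ∀ (e : Ω → ℝ) (r : ℝ), Measurable e →
          (μ[(fun ω => if e ω ≤ r then (1:ℝ) else 0) | m₀] =ᵐ[μ] G r) →
          ∫ ω in D n, (if e ω ≤ r then (1:ℝ) else 0) ∂μ = ∫ ω in D n, G r ω ∂μ := by
        intro e r he hGe
        rw [← setIntegral_condExp hm₀ (aux_integrable_ind μ he measurable_const) (hDmeas n)]
        exact integral_congr_ae (ae_restrict_of_ae hGe)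
      have h1 := step2 e₁ qr he₁ (hG₁ qr)
      have h2 := step2 e₂ p he₂ (hG₂ p)
      have step3 : ∫ ω in D n, ((if e₁ ω ≤ qr then (1:ℝ) else 0)
            - (if e₂ ω ≤ p then 1 else 0)) ∂μ = ∫ ω in D n, (G qr ω - G p ω) ∂μ := by
        rw [integral_sub ((aux_integrable_ind μ he₁ measurable_const).integrableOn)
          ((aux_integrable_ind μ he₂ measurable_const).integrableOn), h1, h2,
          integral_sub ((hG_int qr).integrableOn) ((hG_int p).integrableOn)]
      have hGpos : ∀ ω, 0 < G qr ω - G p ω := fun ω => sub_pos.mpr (hGmono ω hpq)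
      have step4 : 0 < ∫ ω in D n, (G qr ω - G p ω) ∂μ := by
        rw [setIntegral_pos_iff_support_of_nonneg_ae ?_ ?_]
        · have : Function.support (fun ω => G qr ω - G p ω) = univ := by
            ext ω; simp [(hGpos ω).ne']
          rwa [this, univ_inter]
        · exact Filter.Eventually.of_forall fun ω => (hGpos ω).le
        · exact ((hG_int qr).sub (hG_int p)).integrableOn
      linarith [step1, step3 ▸ step4]
  -- sum over the pieces
  have hsum : HasSum (fun n => ∫ ω in D n, f ω ∂μ) (∫ ω in B, f ω ∂μ) := by
    have := hasSum_integral_iUnion (μ := μ) (f := f) hDmeasΩ (disjoint_disjointed C)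
      (by rw [hDU]; exact hf_int.integrableOn)
    rwa [hDU] at this
  obtain ⟨n₀, hn₀⟩ : ∃ n, μ (D n) ≠ 0 := by
    by_contra h
    push_neg at h
    have : μ (⋃ n, D n) = 0 := measure_iUnion_null h
    rw [hDU] at this
    exact absurd this hμB.ne'
  have hpos₀ : 0 < ∫ ω in D n₀, f ω ∂μ := (key n₀).2 (pos_iff_ne_zero.mpr hn₀)
  have hle : ∫ ω in D n₀, f ω ∂μ ≤ ∫ ω in B, f ω ∂μ := by
    refine le_hasSum hsum n₀ fun j _ => ?_
    rcases eq_or_ne (μ (D j)) 0 with h | h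
    · rw [(key j).1 h]
    · exact le_of_lt ((key j).2 (pos_iff_ne_zero.mpr h))
  linarith

open Filter in
lemma aux_setIntegral_eq {Ω : Type*} {m₀ : MeasurableSpace Ω} [mΩ : MeasurableSpace Ω]
    (hm₀ : m₀ ≤ mΩ) (μ : @Measure Ω mΩ) [IsProbabilityMeasure μ]
    {e₁ e₂ a : Ω → ℝ} (he₁ : Measurable e₁) (he₂ : Measurable e₂)
    (ha : Measurable[m₀] a)
    {G : ℝ → Ω → ℝ}
    (hG₁ : ∀ r : ℝ, μ[(fun ω => if e₁ ω ≤ r then (1:ℝ) else 0) | m₀] =ᵐ[μ] G r)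
    (hG₂ : ∀ r : ℝ, μ[(fun ω => if e₂ ω ≤ r then (1:ℝ) else 0) | m₀] =ᵐ[μ] G r)
    {B : Set Ω} (hB : MeasurableSet[m₀] B) :
    ∫ ω in B, (if e₁ ω ≤ a ω then (1:ℝ) else 0) ∂μ
      = ∫ ω in B, (if e₂ ω ≤ a ω then (1:ℝ) else 0) ∂μ := by
  haveI : SigmaFinite (μ.trim hm₀) := by
    haveI := isFiniteMeasure_trim hm₀ (μ := μ)
    infer_instance
  set aN : ℕ → Ω → ℝ := fun n ω => (⌈a ω * 2 ^ n⌉ : ℝ) / 2 ^ n with haN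
  have h2pos : ∀ n : ℕ, (0:ℝ) < 2 ^ n := fun n => by positivity
  have haNm₀ : ∀ n, Measurable[m₀] (aN n) := by
    intro n
    exact (measurable_from_top (f := fun k : ℤ => (k:ℝ)/2^n)).comp
      (Int.measurable_ceil.comp (ha.mul_const _))
  have hle : ∀ n ω, a ω ≤ aN n ω := by
    intro n ω
    rw [haN, le_div_iff₀ (h2pos n)]
    exact Int.le_ceil _
  have hlt : ∀ n ω, aN n ω < a ω + ((2:ℝ) ^ n)⁻¹ := by
    intro n ω
    rw [haN, div_lt_iff₀ (h2pos n)]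
    have := Int.ceil_lt_add_one (a ω * 2 ^ n)
    calc ((⌈a ω * 2 ^ n⌉ : ℝ)) < a ω * 2 ^ n + 1 := this
      _ = (a ω + ((2:ℝ) ^ n)⁻¹) * 2 ^ n := by field_simp
  have key : ∀ (e : Ω → ℝ), Measurable e →
      (∀ r : ℝ, μ[(fun ω => if e ω ≤ r then (1:ℝ) else 0) | m₀] =ᵐ[μ] G r) → ∀ n : ℕ,
      ∫ ω in B, (if e ω ≤ aN n ω then (1:ℝ) else 0) ∂μ
        = ∑' k : ℤ, ∫ ω in B ∩ {ω | ⌈a ω * 2 ^ n⌉ = k}, G ((k:ℝ)/2^n) ω ∂μ := by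
    intro e he hGe n
    set Bk : ℤ → Set Ω := fun k => B ∩ {ω | ⌈a ω * 2 ^ n⌉ = k} with hBkdef
    have hBk : ∀ k, MeasurableSet[m₀] (Bk k) := by
      intro k
      exact hB.inter ((Int.measurable_ceil.comp (ha.mul_const _)) (measurableSet_singleton k))
    have hBkΩ : ∀ k, MeasurableSet (Bk k) := fun k => hm₀ _ (hBk k)
    have hdisj : Pairwise (Function.onFun Disjoint Bk) := by
      intro k l hkl
      apply Set.disjoint_left.mpr
      rintro ω ⟨_, hk⟩ ⟨_, hl⟩
      exact hkl ((hk : ⌈a ω * 2 ^ n⌉ = k) ▸ (hl : ⌈a ω * 2 ^ n⌉ = l) ▸ rfl)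
    have hcover : B = ⋃ k, Bk k := by
      ext ω
      constructor
      · intro hω; exact mem_iUnion.mpr ⟨⌈a ω * 2 ^ n⌉, hω, rfl⟩
      · intro hω; obtain ⟨k, hk⟩ := mem_iUnion.mp hω; exact hk.1
    have hint : Integrable (fun ω => if e ω ≤ aN n ω then (1:ℝ) else 0) μ :=
      aux_integrable_ind μ he ((haNm₀ n).mono hm₀ le_rfl)
    have step1 : ∫ ω in B, (if e ω ≤ aN n ω then (1:ℝ) else 0) ∂μ
        = ∑' k : ℤ, ∫ ω in Bk k, (if e ω ≤ aN n ω then (1:ℝ) else 0) ∂μ := by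
      rw [hcover]
      exact (integral_iUnion hBkΩ hdisj hint.integrableOn).symm ▸ rfl
    rw [step1]
    refine tsum_congr fun k => ?_
    have h1 : ∫ ω in Bk k, (if e ω ≤ aN n ω then (1:ℝ) else 0) ∂μ
        = ∫ ω in Bk k, (if e ω ≤ ((k:ℝ)/2^n) then (1:ℝ) else 0) ∂μ := by
      apply setIntegral_congr_fun (hBkΩ k)
      intro ω hω
      have hv : aN n ω = (k:ℝ)/2^n := by
        have h1 : ⌈a ω * 2 ^ n⌉ = k := hω.2
        simp only [haN, h1]
      simp only [hv]
    rw [h1, ← setIntegral_condExp hm₀ (aux_integrable_ind μ he measurable_const) (hBk k)]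
    exact integral_congr_ae (ae_restrict_of_ae (hGe _))
  have tend : ∀ (e : Ω → ℝ), Measurable e →
      Tendsto (fun n => ∫ ω in B, (if e ω ≤ aN n ω then (1:ℝ) else 0) ∂μ)
        atTop (nhds (∫ ω in B, (if e ω ≤ a ω then (1:ℝ) else 0) ∂μ)) := by
    intro e he
    apply tendsto_integral_of_dominated_convergence (fun _ => (1:ℝ))
    · exact fun n => (aux_integrable_ind μ he
        ((haNm₀ n).mono hm₀ le_rfl)).aestronglyMeasurable.restrict
    · exact integrable_const 1
    · intro n
      filter_upwards with ω
      by_cases h : e ω ≤ aN n ω <;> simp [h]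
    · filter_upwards with ω
      by_cases h : e ω ≤ a ω
      · have hc : ∀ n, (if e ω ≤ aN n ω then (1:ℝ) else 0) = 1 :=
          fun n => if_pos (h.trans (hle n ω))
        simp only [hc, if_pos h]
        exact tendsto_const_nhds
      · push_neg at h
        have h0 : Tendsto (fun n : ℕ => ((2:ℝ) ^ n)⁻¹) atTop (nhds 0) :=
          (tendsto_pow_atTop_atTop_of_one_lt one_lt_two).inv_tendsto_atTop
        have hev : ∀ᶠ n in atTop, (if e ω ≤ aN n ω then (1:ℝ) else 0) = 0 := by
          filter_upwards [h0.eventually_lt_const (sub_pos.mpr h)] with n hn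
          have : aN n ω < e ω := by
            have := hlt n ω
            linarith
          exact if_neg (not_le.mpr this)
        rw [if_neg (not_le.mpr h)]
        exact Tendsto.congr' (hev.mono fun n hn => hn.symm) tendsto_const_nhds
  exact tendsto_nhds_unique
    ((tend e₁ he₁).congr (key e₁ he₁ hG₁))
    ((tend e₂ he₂).congr (key e₂ he₂ hG₂))

lemma aux_sign {Ω : Type*} {m₁ m₀ : MeasurableSpace Ω} [mΩ : MeasurableSpace Ω]
    (hm₀ : m₀ ≤ mΩ) (h₁₀ : m₁ ≤ m₀) (μ : @Measure Ω mΩ) [IsProbabilityMeasure μ]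
    {e₁ e₂ a₁ a₂ : Ω → ℝ} (he₁ : Measurable e₁) (he₂ : Measurable e₂)
    (ha₁ : Measurable[m₀] a₁) (ha₂ : Measurable[m₀] a₂)
    {G : ℝ → Ω → ℝ}
    (hG₁ : ∀ r : ℝ, μ[(fun ω => if e₁ ω ≤ r then (1:ℝ) else 0) | m₀] =ᵐ[μ] G r)
    (hG₂ : ∀ r : ℝ, μ[(fun ω => if e₂ ω ≤ r then (1:ℝ) else 0) | m₀] =ᵐ[μ] G r)
    (hGmono : ∀ ω, StrictMono (fun r => G r ω))
    {d : Ω → ℝ} (hd : Measurable[m₁] d) (hda : ∀ ω, d ω = a₁ ω - a₂ ω) :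
    ∀ᵐ ω ∂μ, Real.sign (d ω) =
      Real.sign ((μ[(fun ω' => (if e₁ ω' ≤ a₁ ω' then (1:ℝ) else 0) -
        (if e₂ ω' ≤ a₂ ω' then 1 else 0)) | m₁]) ω) := by
  have hm₁ : m₁ ≤ mΩ := h₁₀.trans hm₀
  haveI : SigmaFinite (μ.trim hm₁) := by
    haveI := isFiniteMeasure_trim hm₁ (μ := μ)
    infer_instance
  have ha₁Ω : Measurable a₁ := ha₁.mono hm₀ le_rfl
  have ha₂Ω : Measurable a₂ := ha₂.mono hm₀ le_rfl
  set f : Ω → ℝ :=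
    fun ω => (if e₁ ω ≤ a₁ ω then (1:ℝ) else 0) - (if e₂ ω ≤ a₂ ω then 1 else 0) with hf
  have hf_int : Integrable f μ :=
    (aux_integrable_ind μ he₁ ha₁Ω).sub (aux_integrable_ind μ he₂ ha₂Ω)
  set g : Ω → ℝ := μ[f | m₁] with hg
  have hgm : Measurable[m₁] g := stronglyMeasurable_condExp.measurable
  -- case d > 0
  have hN₁ : μ ({ω | 0 < d ω} ∩ {ω | g ω ≤ 0}) = 0 := by
    by_contra h
    have hpos := pos_iff_ne_zero.mpr h
    have hmeas : MeasurableSet[m₁] ({ω | 0 < d ω} ∩ {ω | g ω ≤ 0}) :=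
      (measurableSet_lt measurable_const hd).inter (measurableSet_le hgm measurable_const)
    have hI := aux_setIntegral_pos hm₀ μ he₁ he₂ ha₁ ha₂ hG₁ hG₂ hGmono
      (h₁₀ _ hmeas) (fun ω hω => by
        have h1 := hda ω
        have h2 : 0 < d ω := hω.1
        linarith) hpos
    have hEq : ∫ ω in {ω | 0 < d ω} ∩ {ω | g ω ≤ 0}, g ω ∂μ
        = ∫ ω in {ω | 0 < d ω} ∩ {ω | g ω ≤ 0}, f ω ∂μ :=
      setIntegral_condExp hm₁ hf_int hmeas
    have hle : ∫ ω in {ω | 0 < d ω} ∩ {ω | g ω ≤ 0}, g ω ∂μ ≤ 0 :=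
      setIntegral_nonpos (hm₁ _ hmeas) (fun ω hω => hω.2)
    rw [hf] at hEq
    linarith
  -- case d < 0
  have hN₂ : μ ({ω | d ω < 0} ∩ {ω | 0 ≤ g ω}) = 0 := by
    by_contra h
    have hpos := pos_iff_ne_zero.mpr h
    have hmeas : MeasurableSet[m₁] ({ω | d ω < 0} ∩ {ω | 0 ≤ g ω}) :=
      (measurableSet_lt hd measurable_const).inter (measurableSet_le measurable_const hgm)
    have hI := aux_setIntegral_pos hm₀ μ he₂ he₁ ha₂ ha₁ hG₂ hG₁ hGmono
      (h₁₀ _ hmeas) (fun ω hω => by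
        have h1 := hda ω
        have h2 : d ω < 0 := hω.1
        linarith) hpos
    have hneg : ∫ ω in {ω | d ω < 0} ∩ {ω | 0 ≤ g ω},
        ((if e₂ ω ≤ a₂ ω then (1:ℝ) else 0) - (if e₁ ω ≤ a₁ ω then 1 else 0)) ∂μ
        = - ∫ ω in {ω | d ω < 0} ∩ {ω | 0 ≤ g ω}, f ω ∂μ := by
      rw [← integral_neg]
      apply integral_congr_ae
      filter_upwards with ω
      rw [hf]
      ring
    have hEq : ∫ ω in {ω | d ω < 0} ∩ {ω | 0 ≤ g ω}, g ω ∂μ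
        = ∫ ω in {ω | d ω < 0} ∩ {ω | 0 ≤ g ω}, f ω ∂μ :=
      setIntegral_condExp hm₁ hf_int hmeas
    have hge : 0 ≤ ∫ ω in {ω | d ω < 0} ∩ {ω | 0 ≤ g ω}, g ω ∂μ :=
      setIntegral_nonneg (hm₁ _ hmeas) (fun ω hω => hω.2)
    linarith
  -- case d = 0 : the set integral of f vanishes
  have hzero : ∀ (N : Set Ω), MeasurableSet[m₁] N → (∀ ω ∈ N, d ω = 0) →
      ∫ ω in N, f ω ∂μ = 0 := by
    intro N hN hNd
    have hNm₀ : MeasurableSet[m₀] N := h₁₀ _ hN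
    have h12 : ∫ ω in N, (if e₂ ω ≤ a₂ ω then (1:ℝ) else 0) ∂μ
        = ∫ ω in N, (if e₂ ω ≤ a₁ ω then (1:ℝ) else 0) ∂μ := by
      apply setIntegral_congr_fun (hm₀ _ hNm₀)
      intro ω hω
      have h1 : a₁ ω = a₂ ω := by
        have := hda ω
        have := hNd ω hω
        linarith
      simp only [h1]
    have heq := aux_setIntegral_eq hm₀ μ he₁ he₂ ha₁ hG₁ hG₂ hNm₀
    have hsplit : ∫ ω in N, f ω ∂μ
        = ∫ ω in N, (if e₁ ω ≤ a₁ ω then (1:ℝ) else 0) ∂μ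
          - ∫ ω in N, (if e₂ ω ≤ a₂ ω then (1:ℝ) else 0) ∂μ := by
      rw [hf]
      exact integral_sub (aux_integrable_ind μ he₁ ha₁Ω).integrableOn
        (aux_integrable_ind μ he₂ ha₂Ω).integrableOn
    rw [hsplit, h12, heq, sub_self]
  have hN₃ : μ ({ω | d ω = 0} ∩ {ω | 0 < g ω}) = 0 := by
    by_contra h
    have hpos := pos_iff_ne_zero.mpr h
    have hmeas : MeasurableSet[m₁] ({ω | d ω = 0} ∩ {ω | 0 < g ω}) :=
      (hd (measurableSet_singleton 0)).inter (measurableSet_lt measurable_const hgm)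
    have h0 : ∫ ω in {ω | d ω = 0} ∩ {ω | 0 < g ω}, g ω ∂μ = 0 := by
      rw [setIntegral_condExp hm₁ hf_int hmeas]
      exact hzero _ hmeas (fun ω hω => hω.1)
    have hlt : 0 < ∫ ω in {ω | d ω = 0} ∩ {ω | 0 < g ω}, g ω ∂μ := by
      rw [setIntegral_pos_iff_support_of_nonneg_ae ?_ ?_]
      · refine lt_of_lt_of_le hpos (measure_mono ?_)
        intro ω hω
        exact ⟨ne_of_gt hω.2, hω⟩
      · exact (ae_restrict_iff' (hm₁ _ hmeas)).mpr
          (Filter.Eventually.of_forall fun ω hω => hω.2.le)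
      · exact integrable_condExp.integrableOn
    linarith
  have hN₄ : μ ({ω | d ω = 0} ∩ {ω | g ω < 0}) = 0 := by
    by_contra h
    have hpos := pos_iff_ne_zero.mpr h
    have hmeas : MeasurableSet[m₁] ({ω | d ω = 0} ∩ {ω | g ω < 0}) :=
      (hd (measurableSet_singleton 0)).inter (measurableSet_lt hgm measurable_const)
    have h0 : ∫ ω in {ω | d ω = 0} ∩ {ω | g ω < 0}, g ω ∂μ = 0 := by
      rw [setIntegral_condExp hm₁ hf_int hmeas]
      exact hzero _ hmeas (fun ω hω => hω.1)
    have hlt : 0 < ∫ ω in {ω | d ω = 0} ∩ {ω | g ω < 0}, (- g ω) ∂μ := by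
      rw [setIntegral_pos_iff_support_of_nonneg_ae ?_ ?_]
      · refine lt_of_lt_of_le hpos (measure_mono ?_)
        intro ω hω
        exact ⟨neg_ne_zero.mpr (ne_of_lt hω.2), hω⟩
      · exact (ae_restrict_iff' (hm₁ _ hmeas)).mpr
          (Filter.Eventually.of_forall fun ω hω => by
            have h2 : g ω < 0 := hω.2
            simp only [Pi.zero_apply]
            linarith)
      · exact (integrable_condExp (m := m₁) (f := f)).neg.integrableOn
    rw [integral_neg] at hlt
    linarith
  -- combine
  filter_upwards [measure_eq_zero_iff_ae_notMem.mp hN₁, measure_eq_zero_iff_ae_notMem.mp hN₂,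
    measure_eq_zero_iff_ae_notMem.mp hN₃, measure_eq_zero_iff_ae_notMem.mp hN₄] with ω h1 h2 h3 h4
  rcases lt_trichotomy (d ω) 0 with hd0 | hd0 | hd0
  · have hgneg : g ω < 0 := by
      by_contra hgc
      push_neg at hgc
      exact h2 ⟨hd0, hgc⟩
    rw [Real.sign_of_neg hd0, Real.sign_of_neg hgneg]
  · have hg3 : ¬ 0 < g ω := fun hh => h3 ⟨hd0, hh⟩
    have hg4 : ¬ g ω < 0 := fun hh => h4 ⟨hd0, hh⟩
    have hgz : g ω = 0 := le_antisymm (not_lt.mp hg3) (not_lt.mp hg4)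
    rw [hd0, hgz, Real.sign_zero]
  · have hgpos : 0 < g ω := by
      by_contra hgc
      push_neg at hgc
      exact h1 ⟨hd0, hgc⟩
    rw [Real.sign_of_pos hd0, Real.sign_of_pos hgpos]

/-- In the binary choice panel data model `Y_t = 1{X_t'β + v ≥ ε_t}`, if the
distribution of `ε_t` conditional on `(X,v)` is time invariant with everywhere positive
density (so its cdf `F` is strictly increasing and common across periods), then for any two
periods `s < t`: `sgn((X_s − X_t)'β) = sgn(E(Y_s − Y_t | X))` almost surely. -/
theorem panel_binary_sign_equivalence {q T : ℕ} {Ω : Type*} [MeasurableSpace Ω]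
    (μ : Measure Ω) [IsProbabilityMeasure μ]
    (X : Ω → Fin T → Fin q → ℝ) (hX : Measurable X)
    (v : Ω → ℝ) (hv : Measurable v)
    (ε : Fin T → Ω → ℝ) (hε : ∀ t, Measurable (ε t))
    (β : Fin q → ℝ)
    -- the binary outcomes Y_t = 1{X_t'β + v ≥ ε_t}
    (Y : Fin T → Ω → ℝ)
    (hY : ∀ t ω, Y t ω = if ε t ω ≤ (∑ i, X ω t i * β i) + v ω then 1 else 0)
    -- `F x w` is the common (time-invariant) cdf of `ε_t` conditional on `(X,v) = (x,w)`
    (F : (Fin T → Fin q → ℝ) → ℝ → ℝ → ℝ)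
    -- everywhere positive conditional density: F is strictly increasing
    (hFstrict : ∀ x w, StrictMono (F x w))
    -- conditional cdf identity, the same F for every period t (time invariance)
    (hcdf : ∀ (t : Fin T) (r : ℝ),
      condExpGiven μ (fun ω => (X ω, v ω)) (fun ω => if ε t ω ≤ r then 1 else 0)
        =ᵐ[μ] fun ω => F (X ω) (v ω) r) :
    ∀ s t : Fin T, s < t →
      ∀ᵐ ω ∂μ,
        Real.sign (∑ i, (X ω s i - X ω t i) * β i) =
          Real.sign (condExpGiven μ X (fun ω' => Y s ω' - Y t ω') ω) := by
  intro s t _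
  have hW : Measurable fun ω => (X ω, v ω) := hX.prodMk hv
  have hm₀ : MeasurableSpace.comap (fun ω => (X ω, v ω)) inferInstance ≤ ‹MeasurableSpace Ω› :=
    hW.comap_le
  have h₁₀ : MeasurableSpace.comap X inferInstance ≤
      MeasurableSpace.comap (fun ω => (X ω, v ω)) inferInstance := by
    have h : MeasurableSpace.comap X (inferInstance : MeasurableSpace (Fin T → Fin q → ℝ)) =
        MeasurableSpace.comap (fun ω => (X ω, v ω))
          (MeasurableSpace.comap Prod.fst inferInstance) := by
      rw [MeasurableSpace.comap_comp]
      rfl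
    rw [h]
    exact MeasurableSpace.comap_mono measurable_fst.comap_le
  have haMeas : ∀ u : Fin T,
      Measurable[MeasurableSpace.comap (fun ω => (X ω, v ω)) inferInstance]
        fun ω => (∑ i, X ω u i * β i) + v ω := by
    intro u
    have hg : Measurable fun p : (Fin T → Fin q → ℝ) × ℝ => (∑ i, p.1 u i * β i) + p.2 := by
      apply Measurable.add
      · apply Finset.measurable_sum
        intro i _
        exact ((measurable_pi_apply i).comp
          ((measurable_pi_apply u).comp measurable_fst)).mul_const _
      · exact measurable_snd
    exact hg.comp (comap_measurable _)
  have hdMeas : Measurable[MeasurableSpace.comap X inferInstance]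
      fun ω => ∑ i, (X ω s i - X ω t i) * β i := by
    have hg : Measurable fun x : Fin T → Fin q → ℝ => ∑ i, (x s i - x t i) * β i := by
      apply Finset.measurable_sum
      intro i _
      fun_prop
    exact hg.comp (comap_measurable _)
  have hG : ∀ (u : Fin T) (r : ℝ),
      μ[(fun ω => if ε u ω ≤ r then (1:ℝ) else 0) |
        MeasurableSpace.comap (fun ω => (X ω, v ω)) inferInstance] =ᵐ[μ]
        (fun r' => fun ω => F (X ω) (v ω) r') r := fun u r => hcdf u r
  have main := aux_sign hm₀ h₁₀ μ (hε s) (hε t) (haMeas s) (haMeas t)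
    (G := fun r ω => F (X ω) (v ω) r) (hG s) (hG t)
    (fun ω => hFstrict (X ω) (v ω))
    hdMeas (fun ω => by simp only [sub_mul, Finset.sum_sub_distrib]; ring)
  have hYfun : (fun ω' => Y s ω' - Y t ω') = fun ω' =>
      (if ε s ω' ≤ (∑ i, X ω' s i * β i) + v ω' then (1:ℝ) else 0) -
      (if ε t ω' ≤ (∑ i, X ω' t i * β i) + v ω' then (1:ℝ) else 0) := by
    funext ω'
    rw [hY s ω', hY t ω']
  simp only [condExpGiven, hYfun]
  exact main
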